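/- The ring homomorphism from the one-variable Laurent polynomial ring ℤ[t,t⁻¹] to T = ℤ[p,p⁻¹,q,q⁻¹]/((p−1)(p−q),(q−1)(p−q)) determined by sending t to q is injective. -/

import Mathlib

set_option maxRecDepth 4000

/-!  The ring `T = ℤ[p,p⁻¹,q,q⁻¹] / ((p−1)(p−q), (q−1)(p−q))`.

We realize the two-variable Laurent polynomial ring `ℤ[p,p⁻¹,q,q⁻¹]` as the
iterated Laurent polynomial ring `(ℤ[T;T⁻¹])[T;T⁻¹]`, where the inner variable
is `p` and the outer variable is `q`.  -/

noncomputable section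

/-- The two-variable Laurent polynomial ring `ℤ[p,p⁻¹,q,q⁻¹]`. -/
abbrev L : Type := LaurentPolynomial (LaurentPolynomial ℤ)

/-- The variable `p` (the inner variable). -/
def pL : L := LaurentPolynomial.C (LaurentPolynomial.T 1)

/-- The variable `q` (the outer variable). -/
def qL : L := LaurentPolynomial.T 1

/-- The defining ideal `((p−1)(p−q), (q−1)(p−q))`. -/
def idealI : Ideal L := Ideal.span {(pL - 1) * (pL - qL), (qL - 1) * (pL - qL)}

/-- The ring `T = ℤ[p,p⁻¹,q,q⁻¹] / ((p−1)(p−q), (q−1)(p−q))`. -/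
abbrev TT : Type := L ⧸ idealI

/-- The image of `p` in `T`. -/
def pT : TT := Ideal.Quotient.mk idealI pL

/-- The image of `q` in `T`. -/
def qT : TT := Ideal.Quotient.mk idealI qL

/-- Evaluation of a Laurent polynomial at a unit, along a ring hom on coefficients. -/
def laurentEval {R A : Type*} [CommSemiring R] [CommSemiring A]
    (φ : R →+* A) (u : Aˣ) : LaurentPolynomial R →+* A :=
  AddMonoidAlgebra.liftNCRingHom φ ((Units.coeHom A).comp (zpowersHom Aˣ u))
    (fun _ _ => Commute.all _ _)

@[simp] theorem laurentEval_T {R A : Type*} [CommSemiring R] [CommSemiring A]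
    (φ : R →+* A) (u : Aˣ) (n : ℤ) :
    laurentEval φ u (LaurentPolynomial.T n) = ((u ^ n : Aˣ) : A) := by
  have : laurentEval φ u (LaurentPolynomial.T n)
      = AddMonoidAlgebra.liftNC (φ : R →+ A)
          (((Units.coeHom A).comp (zpowersHom Aˣ u) : Multiplicative ℤ →* A) : Multiplicative ℤ → A)
          (AddMonoidAlgebra.single n 1) := rfl
  rw [this, AddMonoidAlgebra.liftNC_single]
  simp

@[simp] theorem laurentEval_C {R A : Type*} [CommSemiring R] [CommSemiring A]
    (φ : R →+* A) (u : Aˣ) (r : R) :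
    laurentEval φ u (LaurentPolynomial.C r) = φ r := by
  have : laurentEval φ u (LaurentPolynomial.C r)
      = AddMonoidAlgebra.liftNC (φ : R →+ A)
          (((Units.coeHom A).comp (zpowersHom Aˣ u) : Multiplicative ℤ →* A) : Multiplicative ℤ → A)
          (AddMonoidAlgebra.single 0 r) := rfl
  rw [this, AddMonoidAlgebra.liftNC_single]
  simp

/-- The unit `T 1` of `ℤ[T;T⁻¹]`. -/
def tUnit : (LaurentPolynomial ℤ)ˣ := (LaurentPolynomial.isUnit_T (R := ℤ) 1).unit

@[simp] theorem tUnit_val : (tUnit : LaurentPolynomial ℤ) = LaurentPolynomial.T 1 := rfl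

/-- The map `L → ℤ[t,t⁻¹]` sending both `p` and `q` to `t`. -/
def gMap : L →+* LaurentPolynomial ℤ :=
  laurentEval (laurentEval (Int.castRingHom _) tUnit) tUnit

theorem gMap_pL : gMap pL = LaurentPolynomial.T 1 := by
  simp [gMap, pL]

theorem gMap_qL : gMap qL = LaurentPolynomial.T 1 := by
  simp [gMap, qL]

theorem idealI_le_ker : idealI ≤ RingHom.ker gMap := by
  rw [idealI, Ideal.span_le]
  rintro x (rfl | rfl) <;>
    simp [RingHom.mem_ker, map_mul, map_sub, gMap_pL, gMap_qL]

/-- The induced map `TT → ℤ[t,t⁻¹]`. -/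
def gBar : TT →+* LaurentPolynomial ℤ :=
  Ideal.Quotient.lift idealI gMap (fun a ha => idealI_le_ker ha)

theorem gBar_qT : gBar qT = LaurentPolynomial.T 1 := by
  simp [gBar, qT, gMap_qL]
  exact (Ideal.Quotient.lift_mk _ _ _).trans gMap_qL

theorem endo_T_eq (h : LaurentPolynomial ℤ →+* LaurentPolynomial ℤ)
    (h1 : h (LaurentPolynomial.T 1) = LaurentPolynomial.T 1) (n : ℤ) :
    h (LaurentPolynomial.T n) = LaurentPolynomial.T n := by
  induction n using Int.induction_on with
  | zero => simp [LaurentPolynomial.T_zero]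
  | succ k ih =>
    rw [LaurentPolynomial.T_add, map_mul, ih, h1]
  | pred k ih =>
    have key : h (LaurentPolynomial.T (-(k : ℤ) - 1)) * LaurentPolynomial.T 1
        = LaurentPolynomial.T (-(k : ℤ) - 1) * LaurentPolynomial.T 1 := by
      rw [← h1, ← map_mul, ← LaurentPolynomial.T_add, sub_add_cancel, ih, h1,
        ← LaurentPolynomial.T_add, sub_add_cancel]
    exact (LaurentPolynomial.isUnit_T (R := ℤ) 1).mul_right_cancel key

theorem endo_eq_id (h : LaurentPolynomial ℤ →+* LaurentPolynomial ℤ)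
    (h1 : h (LaurentPolynomial.T 1) = LaurentPolynomial.T 1) (x : LaurentPolynomial ℤ) :
    h x = x := by
  induction x using LaurentPolynomial.induction_on' with
  | add p q hp hq => rw [map_add, hp, hq]
  | C_mul_T n a =>
    rw [map_mul, endo_T_eq h h1 n]
    congr 1
    rw [eq_intCast (LaurentPolynomial.C (R := ℤ)) a, map_intCast]

/-- The ring homomorphism `ℤ[t,t⁻¹] → T` determined by `t ↦ q` is
injective. -/
theorem laurent_to_T_injective
    (f : LaurentPolynomial ℤ →+* TT) (hf : f (LaurentPolynomial.T 1) = qT) :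
    Function.Injective f := by
  have hcomp : ∀ x, (gBar.comp f) x = x := by
    apply endo_eq_id
    rw [RingHom.comp_apply, hf, gBar_qT]
  intro a b hab
  have := congrArg gBar hab
  rwa [← RingHom.comp_apply, ← RingHom.comp_apply, hcomp, hcomp] at this
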